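/- Let V be a commutative unital quantale, (X,a) a V-category, and ψ : X → V a V-module from X to E, i.e. a(x,y) ⊗ ψ(y) ≤ ψ(x) for all x,y ∈ X. Then ψ is right adjoint — i.e. there exists φ : X → V with φ(y) ⊗ a(y,x) ≤ φ(x) for all x,y, such that ψ(x) ⊗ φ(y) ≤ a(x,y) for all x,y and k ≤ ⋁_{x∈X} φ(x) ⊗ ψ(x) — if and only if k ≤ ⋁_{y∈X} ψ(y) ⊗ ⋀_{x∈X} (ψ(x) ⊸ a(x,y)). -/

import Mathlib

/-- The internal hom of a quantale: `u ⊸ v = sSup {z | z * u ≤ v}`. -/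
def qhom {V : Type*} [CommMonoid V] [CompleteLattice V] [IsQuantale V] (u v : V) : V :=
  sSup {z | z * u ≤ v}

theorem qhom_le_iff {V : Type*} [CommMonoid V] [CompleteLattice V] [IsQuantale V]
    {u v z : V} : z ≤ qhom u v ↔ z * u ≤ v :=
  Quantale.leftMulResiduation_le_iff_mul_le

/-- a V-module `ψ : X ⇸ E` is right adjoint iff it is tight, i.e. iff
`k ≤ ⋁_y ψ y ⊗ ⋀_x (ψ x ⊸ a x y)`. -/
theorem stmt6 {V : Type*} [CommMonoid V] [CompleteLattice V] [IsQuantale V]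
    {X : Type*}
    (a : X → X → V) (ha1 : ∀ x, (1 : V) ≤ a x x)
    (ha2 : ∀ x y z, a x y * a y z ≤ a x z)
    (ψ : X → V) (hψ : ∀ x y, a x y * ψ y ≤ ψ x) :
    (∃ φ : X → V, (∀ x y, φ y * a y x ≤ φ x) ∧ (∀ x y, ψ x * φ y ≤ a x y) ∧
        (1 : V) ≤ ⨆ x : X, φ x * ψ x) ↔
      (1 : V) ≤ ⨆ y : X, ψ y * ⨅ x : X, qhom (ψ x) (a x y) := by
  set φ₀ : X → V := fun y => ⨅ x : X, qhom (ψ x) (a x y) with hφ₀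
  have hkey : ∀ x y, φ₀ y * ψ x ≤ a x y := fun x y =>
    qhom_le_iff.mp (iInf_le (fun x => qhom (ψ x) (a x y)) x)
  constructor
  · rintro ⟨φ, hφmod, hφa, hφk⟩
    have hle : ∀ y, φ y ≤ φ₀ y := fun y =>
      le_iInf fun x => qhom_le_iff.mpr (by rw [mul_comm]; exact hφa x y)
    calc (1 : V) ≤ ⨆ x : X, φ x * ψ x := hφk
      _ ≤ ⨆ y : X, ψ y * φ₀ y :=
        iSup_mono fun x => by rw [mul_comm]; exact mul_le_mul_right (hle x) _
  · intro h
    refine ⟨φ₀, ?_, ?_, ?_⟩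
    · intro x y
      refine le_iInf fun x' => qhom_le_iff.mpr ?_
      calc φ₀ y * a y x * ψ x' = φ₀ y * ψ x' * a y x := by
            rw [mul_assoc, mul_assoc, mul_comm (a y x)]
        _ ≤ a x' y * a y x := mul_le_mul_left (hkey x' y) _
        _ ≤ a x' x := ha2 x' y x
    · intro x y; rw [mul_comm]; exact hkey x y
    · exact h.trans (iSup_mono fun y => by rw [mul_comm])
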